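/- For the function f(x,u,p,q,r) = 6qr/p − 6q³/p², at every point (x,u,p,q,r) ∈ ℝ⁵ with p ≠ 0 the Cartan invariants satisfy I₀ = −6q/p, I₃ = 1/(2p), I₄ = 0, and, with the branch formulas for I₄ = 0: I₅ = 0, I₆ = 6/(25p²) (in particular I₆ ≠ 0), I₈ = 0, and I₉ = 0. -/

import Mathlib

noncomputable section

/-- Functions of the five jet variables `(x, u, p, q, r)`. -/
abbrev Jet5 := ℝ → ℝ → ℝ → ℝ → ℝ → ℝ

/-- Partial derivative `F_x`. -/
def pX (F : Jet5) (x u p q r : ℝ) : ℝ := deriv (fun t => F t u p q r) x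
/-- Partial derivative `F_u`. -/
def pU (F : Jet5) (x u p q r : ℝ) : ℝ := deriv (fun t => F x t p q r) u
/-- Partial derivative `F_p`. -/
def pP (F : Jet5) (x u p q r : ℝ) : ℝ := deriv (fun t => F x u t q r) p
/-- Partial derivative `F_q`. -/
def pQ (F : Jet5) (x u p q r : ℝ) : ℝ := deriv (fun t => F x u p t r) q
/-- Partial derivative `F_r`. -/
def pR (F : Jet5) (x u p q r : ℝ) : ℝ := deriv (fun t => F x u p q t) r

/-- Total derivative operator `D̂ₓF = F_x + p F_u + q F_p + r F_q + f F_r`. -/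
def Dhat (f F : Jet5) : Jet5 := fun x u p q r =>
  pX F x u p q r + p * pU F x u p q r + q * pP F x u p q r + r * pQ F x u p q r
    + f x u p q r * pR F x u p q r

/-- Cartan invariant `I₀ = −f_r`. -/
def I0 (f : Jet5) : Jet5 := fun x u p q r => - pR f x u p q r

/-- Cartan invariant `I₁ = (1/4)I₀² − (1/6)D̂ₓI₀`. -/
def I1 (f : Jet5) : Jet5 := fun x u p q r =>
  (1 / 4) * (I0 f x u p q r) ^ 2 - (1 / 6) * Dhat f (I0 f) x u p q r

/-- Cartan invariant `I₂ = −(1/2)D̂ₓI₀ − f_q`. -/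
def I2 (f : Jet5) : Jet5 := fun x u p q r =>
  -(1 / 2) * Dhat f (I0 f) x u p q r - pQ f x u p q r

/-- Cartan invariant `I₃ = −(1/8)(I₀)_r·I₀ + (1/4)(I₁)_r − (1/12)(I₂)_r`. -/
def I3 (f : Jet5) : Jet5 := fun x u p q r =>
  -(1 / 8) * pR (I0 f) x u p q r * I0 f x u p q r
    + (1 / 4) * pR (I1 f) x u p q r - (1 / 12) * pR (I2 f) x u p q r

/-- Cartan invariant `I₄ = −(1/6)(I₀)_r`. -/
def I4 (f : Jet5) : Jet5 := fun x u p q r => -(1 / 6) * pR (I0 f) x u p q r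

/-- Cartan invariant on the branch `I₄ ≠ 0`: `I₅ = −(1/2)(I₄)_r/I₄²`. -/
def I5 (f : Jet5) : Jet5 := fun x u p q r =>
  -(1 / 2) * pR (I4 f) x u p q r / (I4 f x u p q r) ^ 2

/-- Cartan invariant on the branch `I₄ ≠ 0`: `I₆ = −(3/2)I₀·I₄ − (I₂)_r − 6I₃`. -/
def I6 (f : Jet5) : Jet5 := fun x u p q r =>
  -(3 / 2) * I0 f x u p q r * I4 f x u p q r - pR (I2 f) x u p q r - 6 * I3 f x u p q r

/-- Cartan invariant on the branch `I₄ ≠ 0`: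
`I₈ = (I₆/I₄²)(D̂ₓI₄ − (I₄)_r f) − (1/I₄)D̂ₓI₆ + (3/4)I₀² − (1/2)I₀I₆/I₄
      + (3/10)I₂ + (1/3)I₆²/I₄² − (27/10)I₁`. -/
def I8 (f : Jet5) : Jet5 := fun x u p q r =>
  (I6 f x u p q r / (I4 f x u p q r) ^ 2)
      * (Dhat f (I4 f) x u p q r - pR (I4 f) x u p q r * f x u p q r)
    - (1 / I4 f x u p q r) * Dhat f (I6 f) x u p q r
    + (3 / 4) * (I0 f x u p q r) ^ 2
    - (1 / 2) * I0 f x u p q r * I6 f x u p q r / I4 f x u p q r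
    + (3 / 10) * I2 f x u p q r
    + (1 / 3) * (I6 f x u p q r) ^ 2 / (I4 f x u p q r) ^ 2
    - (27 / 10) * I1 f x u p q r

/-- On the branch `I₄ = 0`: `I₅ = −(18/5)I₀I₃ − (3/5)(I₀)_p + (2/5)∂_q(I₂ − 3I₁)`. -/
def I5z (f : Jet5) : Jet5 := fun x u p q r =>
  -(18 / 5) * I0 f x u p q r * I3 f x u p q r - (3 / 5) * pP (I0 f) x u p q r
    + (2 / 5) * pQ (fun x u p q r => I2 f x u p q r - 3 * I1 f x u p q r) x u p q r

/-- On the branch `I₄ = 0`: `I₆ = −(36/25)I₃² − (3/5)I₀(I₃)_q − (6/5)(I₃)_p`. -/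
def I6z (f : Jet5) : Jet5 := fun x u p q r =>
  -(36 / 25) * (I3 f x u p q r) ^ 2 - (3 / 5) * I0 f x u p q r * pQ (I3 f) x u p q r
    - (6 / 5) * pP (I3 f) x u p q r

/-- On the branch `I₄ = 0`:
`I₈ = (7/8)I₀³ − (D̂ₓI₂ − (I₂)_r f) − f_p + 6fI₃ + I₀(−3I₁ − (1/2)I₂)`. -/
def I8z (f : Jet5) : Jet5 := fun x u p q r =>
  (7 / 8) * (I0 f x u p q r) ^ 3
    - (Dhat f (I2 f) x u p q r - pR (I2 f) x u p q r * f x u p q r)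
    - pP f x u p q r + 6 * f x u p q r * I3 f x u p q r
    + I0 f x u p q r * (-3 * I1 f x u p q r - (1 / 2) * I2 f x u p q r)

/-- On the branch `I₄ = 0`: `I₉ = −(6/5)(I₃)_q`. -/
def I9z (f : Jet5) : Jet5 := fun x u p q r => -(6 / 5) * pQ (I3 f) x u p q r

/- Auxiliary derivative lemmas -/
lemma hlin (a b x : ℝ) : HasDerivAt (fun t => a * t + b) a x := by
  simpa using ((hasDerivAt_id x).const_mul a).add_const b
lemma dlin (a b x : ℝ) : deriv (fun t => a * t + b) x = a := (hlin a b x).deriv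
lemma hsq (a b x : ℝ) : HasDerivAt (fun t => a * t ^ 2 + b) (2 * a * x) x := by
  have := ((hasDerivAt_pow 2 x).const_mul a).add_const b
  simpa [mul_comm, mul_assoc, mul_left_comm] using this
lemma dsq (a b x : ℝ) : deriv (fun t => a * t ^ 2 + b) x = 2 * a * x := (hsq a b x).deriv
lemma hcub (a b c x : ℝ) : HasDerivAt (fun t => a * t + b * t ^ 3 + c) (a + 3 * b * x ^ 2) x := by
  have h1 := (hasDerivAt_id x).const_mul a
  have h2 := (hasDerivAt_pow 3 x).const_mul b
  have := (h1.add h2).add_const c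
  simp only [mul_one] at this
  refine this.congr_deriv ?_
  push_cast
  ring
lemma dcub (a b c x : ℝ) : deriv (fun t => a * t + b * t ^ 3 + c) x = a + 3 * b * x ^ 2 :=
  (hcub a b c x).deriv
lemma hinv (a x : ℝ) (hx : x ≠ 0) : HasDerivAt (fun t => a / t) (-(a / x ^ 2)) x := by
  have h := (hasDerivAt_inv hx).const_mul a
  simp only [div_eq_mul_inv]
  refine h.congr_deriv ?_
  field_simp
lemma dinv (a x : ℝ) (hx : x ≠ 0) : deriv (fun t => a / t) x = -(a / x ^ 2) := (hinv a x hx).deriv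
lemma hinv2 (a x : ℝ) (hx : x ≠ 0) : HasDerivAt (fun t => a / t ^ 2) (-(2 * a / x ^ 3)) x := by
  have h := ((hasDerivAt_pow 2 x).inv (pow_ne_zero 2 hx)).const_mul a
  simp only [div_eq_mul_inv]
  refine h.congr_deriv ?_
  field_simp
  ring
lemma dinv2 (a x : ℝ) (hx : x ≠ 0) : deriv (fun t => a / t ^ 2) x = -(2 * a / x ^ 3) :=
  (hinv2 a x hx).deriv

/-- The RHS of the canonical equation. -/
def f₀ : Jet5 := fun _ _ p q r => 6 * q * r / p - 6 * q ^ 3 / p ^ 2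

lemma L0 (x u p q r : ℝ) : I0 f₀ x u p q r = -(6 * q / p) := by
  unfold I0 pR f₀
  rw [show (fun t => 6 * q * t / p - 6 * q ^ 3 / p ^ 2)
      = (fun t => (6 * q / p) * t + (-(6 * q ^ 3 / p ^ 2))) from funext fun t => by ring, dlin]

lemma L0f : I0 f₀ = fun _ _ p q _ => -(6 * q / p) := by
  funext x u p q r; exact L0 x u p q r

lemma LpRI0 (x u p q r : ℝ) : pR (I0 f₀) x u p q r = 0 := by
  rw [L0f]; unfold pR; exact deriv_const r _

lemma LpPI0 {p : ℝ} (hp : p ≠ 0) (x u q r : ℝ) : pP (I0 f₀) x u p q r = 6 * q / p ^ 2 := by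
  rw [L0f]; unfold pP
  rw [show (fun t => -(6 * q / t)) = (fun t => (-(6 * q)) / t) from funext fun t => by ring,
    dinv _ _ hp]
  ring

lemma LD0 {p : ℝ} (hp : p ≠ 0) (x u q r : ℝ) :
    Dhat f₀ (I0 f₀) x u p q r = 6 * q ^ 2 / p ^ 2 - 6 * r / p := by
  have hP := LpPI0 hp x u q r
  rw [Dhat, hP, L0f]
  unfold pX pU pQ pR
  rw [deriv_const x _, deriv_const u _, deriv_const r _,
    show (fun t => -(6 * t / p)) = (fun t => (-(6 / p)) * t + 0) from funext fun t => by ring,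
    dlin]
  ring

lemma LI1 {p : ℝ} (hp : p ≠ 0) (x u q r : ℝ) :
    I1 f₀ x u p q r = 8 * q ^ 2 / p ^ 2 + r / p := by
  rw [I1, L0, LD0 hp]
  field_simp
  ring

lemma LpQf (x u p q r : ℝ) : pQ f₀ x u p q r = 6 * r / p - 18 * q ^ 2 / p ^ 2 := by
  unfold pQ f₀
  rw [show (fun t => 6 * t * r / p - 6 * t ^ 3 / p ^ 2)
      = (fun t => (6 * r / p) * t + (-(6 / p ^ 2)) * t ^ 3 + 0) from funext fun t => by ring,
    dcub]
  ring

lemma LI2 {p : ℝ} (hp : p ≠ 0) (x u q r : ℝ) :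
    I2 f₀ x u p q r = 15 * q ^ 2 / p ^ 2 - 3 * r / p := by
  rw [I2, LD0 hp, LpQf]
  field_simp
  ring

lemma LpRI1 {p : ℝ} (hp : p ≠ 0) (x u q r : ℝ) : pR (I1 f₀) x u p q r = 1 / p := by
  unfold pR
  rw [show (fun t => I1 f₀ x u p q t) = (fun t => (1 / p) * t + 8 * q ^ 2 / p ^ 2) from
    funext fun t => by rw [LI1 hp]; ring, dlin]

lemma LpRI2 {p : ℝ} (hp : p ≠ 0) (x u q r : ℝ) : pR (I2 f₀) x u p q r = -(3 / p) := by
  unfold pR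
  rw [show (fun t => I2 f₀ x u p q t) = (fun t => (-(3 / p)) * t + 15 * q ^ 2 / p ^ 2) from
    funext fun t => by rw [LI2 hp]; ring, dlin]

lemma LI3 {p : ℝ} (hp : p ≠ 0) (x u q r : ℝ) : I3 f₀ x u p q r = 1 / (2 * p) := by
  rw [I3, LpRI0, LpRI1 hp, LpRI2 hp, L0]
  field_simp
  ring

lemma LI4 (x u p q r : ℝ) : I4 f₀ x u p q r = 0 := by
  rw [I4, LpRI0]; ring

lemma LpQI3 {p : ℝ} (hp : p ≠ 0) (x u q r : ℝ) : pQ (I3 f₀) x u p q r = 0 := by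
  unfold pQ
  rw [show (fun t => I3 f₀ x u p t r) = (fun _ => 1 / (2 * p)) from
    funext fun t => LI3 hp x u t r]
  exact deriv_const q _

lemma LpPI3 {p : ℝ} (hp : p ≠ 0) (x u q r : ℝ) : pP (I3 f₀) x u p q r = -(1 / (2 * p ^ 2)) := by
  unfold pP
  have he : (fun t => I3 f₀ x u t q r) =ᶠ[nhds p] (fun t => (1 / 2) / t) := by
    filter_upwards [eventually_ne_nhds hp] with t ht
    rw [LI3 ht, div_div]
  rw [he.deriv_eq, dinv _ _ hp]
  ring

lemma LI5z {p : ℝ} (hp : p ≠ 0) (x u q r : ℝ) : I5z f₀ x u p q r = 0 := by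
  have hq : pQ (fun x u p q r => I2 f₀ x u p q r - 3 * I1 f₀ x u p q r) x u p q r
      = -(18 * q / p ^ 2) := by
    unfold pQ
    rw [show (fun t => I2 f₀ x u p t r - 3 * I1 f₀ x u p t r)
        = (fun t => (-(9 / p ^ 2)) * t ^ 2 + (-(6 * r / p))) from
      funext fun t => by rw [LI2 hp, LI1 hp]; field_simp; ring, dsq]
    ring
  rw [I5z, L0, LI3 hp, LpPI0 hp, hq]
  field_simp
  ring

lemma LI6z {p : ℝ} (hp : p ≠ 0) (x u q r : ℝ) : I6z f₀ x u p q r = 6 / (25 * p ^ 2) := by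
  rw [I6z, LI3 hp, LpQI3 hp, LpPI3 hp, L0]
  field_simp
  ring

lemma LI9z {p : ℝ} (hp : p ≠ 0) (x u q r : ℝ) : I9z f₀ x u p q r = 0 := by
  rw [I9z, LpQI3 hp]; ring

lemma LpPf {p : ℝ} (hp : p ≠ 0) (x u q r : ℝ) :
    pP f₀ x u p q r = -(6 * q * r / p ^ 2) + 12 * q ^ 3 / p ^ 3 := by
  unfold pP f₀
  have h := (hinv (6 * q * r) p hp).sub (hinv2 (6 * q ^ 3) p hp)
  rw [show (fun t => 6 * q * r / t - 6 * q ^ 3 / t ^ 2) = ((fun t => 6 * q * r / t) - fun t => 6 * q ^ 3 / t ^ 2) from rfl, h.deriv]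
  ring

lemma LDI2 {p : ℝ} (hp : p ≠ 0) (x u q r : ℝ) :
    Dhat f₀ (I2 f₀) x u p q r =
      q * (3 * r / p ^ 2 - 30 * q ^ 2 / p ^ 3) + r * (30 * q / p ^ 2)
        + f₀ x u p q r * (-(3 / p)) := by
  have hx : pX (I2 f₀) x u p q r = 0 := by
    unfold pX
    rw [show (fun t => I2 f₀ t u p q r) = (fun _ => 15 * q ^ 2 / p ^ 2 - 3 * r / p) from
      funext fun t => LI2 hp t u q r]
    exact deriv_const x _
  have hu : pU (I2 f₀) x u p q r = 0 := by
    unfold pU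
    rw [show (fun t => I2 f₀ x t p q r) = (fun _ => 15 * q ^ 2 / p ^ 2 - 3 * r / p) from
      funext fun t => LI2 hp x t q r]
    exact deriv_const u _
  have hpp : pP (I2 f₀) x u p q r = 3 * r / p ^ 2 - 30 * q ^ 2 / p ^ 3 := by
    unfold pP
    have he : (fun t => I2 f₀ x u t q r) =ᶠ[nhds p]
        (fun t => 15 * q ^ 2 / t ^ 2 - 3 * r / t) := by
      filter_upwards [eventually_ne_nhds hp] with t ht
      exact LI2 ht x u q r
    rw [he.deriv_eq, show (fun t => 15 * q ^ 2 / t ^ 2 - 3 * r / t) = ((fun t => 15 * q ^ 2 / t ^ 2) - fun t => 3 * r / t) from rfl, ((hinv2 (15 * q ^ 2) p hp).sub (hinv (3 * r) p hp)).deriv]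
    ring
  have hq : pQ (I2 f₀) x u p q r = 30 * q / p ^ 2 := by
    unfold pQ
    rw [show (fun t => I2 f₀ x u p t r) = (fun t => (15 / p ^ 2) * t ^ 2 + (-(3 * r / p))) from
      funext fun t => by rw [LI2 hp]; ring, dsq]
    ring
  rw [Dhat, hx, hu, hpp, hq, LpRI2 hp]
  ring

lemma LI8z {p : ℝ} (hp : p ≠ 0) (x u q r : ℝ) : I8z f₀ x u p q r = 0 := by
  rw [I8z, L0, LDI2 hp, LpRI2 hp, LpPf hp, LI3 hp, LI1 hp, LI2 hp]
  show _ - (_ - _ * f₀ x u p q r) - _ + 6 * f₀ x u p q r * _ + _ = 0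
  rw [show f₀ x u p q r = 6 * q * r / p - 6 * q ^ 3 / p ^ 2 from rfl]
  field_simp
  ring

/-- for `f = 6qr/p − 6q³/p²`, at every point with `p ≠ 0`:
`I₀ = −6q/p`, `I₃ = 1/(2p)`, `I₄ = 0`, and with the `I₄ = 0` branch formulas
`I₅ = 0`, `I₆ = 6/(25p²) ≠ 0`, `I₈ = 0`, `I₉ = 0`. -/
theorem stmt_17 (f : Jet5)
    (hf : f = fun _ _ p q r => 6 * q * r / p - 6 * q ^ 3 / p ^ 2) :
    ∀ x u p q r : ℝ, p ≠ 0 →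
      I0 f x u p q r = -6 * q / p ∧
      I3 f x u p q r = 1 / (2 * p) ∧
      I4 f x u p q r = 0 ∧
      I5z f x u p q r = 0 ∧
      I6z f x u p q r = 6 / (25 * p ^ 2) ∧
      I6z f x u p q r ≠ 0 ∧
      I8z f x u p q r = 0 ∧
      I9z f x u p q r = 0 := by
  subst hf
  intro x u p q r hp
  rw [show (fun _ _ p q r : ℝ => 6 * q * r / p - 6 * q ^ 3 / p ^ 2) = f₀ from rfl]
  refine ⟨by rw [L0]; ring, LI3 hp x u q r, LI4 x u p q r, LI5z hp x u q r,
    LI6z hp x u q r, ?_, LI8z hp x u q r, LI9z hp x u q r⟩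
  rw [LI6z hp x u q r]
  exact div_ne_zero (by norm_num) (by positivity)
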